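/- Let n be a positive integer and let a, b be integers with 0 ≤ a ≤ n and 0 ≤ b ≤ n. If there exists an orientation of the n-cube in which every vertex has in-degree a or b, then there exists an orientation of the (n+2)-cube in which every vertex has in-degree a+1 or b+1. -/

import Mathlib

/-- Flip coordinate `i` of a binary `n`-tuple. -/
def flipBit {n : ℕ} (v : Fin n → ZMod 2) (i : Fin n) : Fin n → ZMod 2 :=
  Function.update v i (v i + 1)

/-- An orientation of the `n`-cube: to each edge (a pair of vertices differing in
exactly one coordinate) we assign a head, one of its two endpoints.  The edge at
vertex `v` in direction `i` joins `v` and `flipBit v i`; `head v i` is the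
assigned head of that edge, which must be one of the endpoints and must not
depend on from which endpoint the edge is viewed. -/
structure CubeOrientation (n : ℕ) where
  head : (Fin n → ZMod 2) → Fin n → (Fin n → ZMod 2)
  head_mem : ∀ v i, head v i = v ∨ head v i = flipBit v i
  compatible : ∀ v i, head (flipBit v i) i = head v i

/-- The in-degree of a vertex `v`: the number of edges incident to `v`
whose head is `v`. -/
def CubeOrientation.inDeg {n : ℕ} (o : CubeOrientation n) (v : Fin n → ZMod 2) : ℕ :=
  (Finset.univ.filter fun i : Fin n => o.head v i = v).card

lemma flipBit_apply_self {n : ℕ} (v : Fin n → ZMod 2) (i : Fin n) :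
    flipBit v i i = v i + 1 := Function.update_self _ _ _

lemma flipBit_apply_ne {n : ℕ} (v : Fin n → ZMod 2) (i j : Fin n) (h : j ≠ i) :
    flipBit v i j = v j := Function.update_of_ne h _ _

lemma flipBit_ne {n : ℕ} (v : Fin n → ZMod 2) (i : Fin n) : flipBit v i ≠ v := by
  intro h
  have := congrFun h i
  rw [flipBit_apply_self] at this
  have h1 : v i + 1 = v i + 0 := by rw [add_zero]; exact this
  exact one_ne_zero (add_left_cancel h1)

lemma flipBit_flipBit {n : ℕ} (v : Fin n → ZMod 2) (i : Fin n) :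
    flipBit (flipBit v i) i = v := by
  funext j
  by_cases h : j = i
  · subst h
    rw [flipBit_apply_self, flipBit_apply_self]
    have : (1 : ZMod 2) + 1 = 0 := by decide
    rw [add_assoc, this, add_zero]
  · rw [flipBit_apply_ne _ _ _ h, flipBit_apply_ne _ _ _ h]

def proj2 (n : ℕ) (v : Fin (n+2) → ZMod 2) : Fin n → ZMod 2 :=
  fun j => v (Fin.castAdd 2 j)

lemma proj2_flipBit (n : ℕ) (v : Fin (n+2) → ZMod 2) (i : Fin n) :
    proj2 n (flipBit v (Fin.castAdd 2 i)) = flipBit (proj2 n v) i := by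
  funext j
  by_cases h : j = i
  · subst h
    simp [proj2, flipBit_apply_self]
  · rw [proj2, flipBit_apply_ne _ _ _ (fun hc => h (Fin.castAdd_injective _ _ hc))]
    rw [flipBit_apply_ne _ _ _ h]
    rfl

def liftOrient (n : ℕ) (o : CubeOrientation n) : CubeOrientation (n+2) where
  head v i :=
    if h : (i : ℕ) < n then
      (if o.head (proj2 n v) ⟨i, h⟩ = proj2 n v then v else flipBit v i)
    else if (i : ℕ) = n then
      (if v ⟨n, by omega⟩ = v ⟨n+1, by omega⟩ then v else flipBit v i)
    else
      (if v ⟨n+1, by omega⟩ = v ⟨n, by omega⟩ + 1 then v else flipBit v i)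
  head_mem v i := by
    try dsimp only
    split_ifs <;> simp
  compatible v i := by
    try dsimp only
    by_cases h : (i : ℕ) < n
    · rw [dif_pos h, dif_pos h]
      have hi : i = Fin.castAdd 2 (⟨i, h⟩ : Fin n) := by
        apply Fin.ext; rfl
      have hp : proj2 n (flipBit v i) = flipBit (proj2 n v) ⟨i, h⟩ := by
        have := proj2_flipBit n v ⟨i, h⟩
        rw [← hi] at this
        exact this
      rw [hp, o.compatible]
      by_cases hc : o.head (proj2 n v) ⟨i, h⟩ = proj2 n v
      · rw [if_pos hc]
        rw [if_neg, flipBit_flipBit]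
        rw [hc]
        exact fun he => flipBit_ne _ _ he.symm
      · rw [if_neg hc, if_pos]
        rcases o.head_mem (proj2 n v) ⟨i, h⟩ with h1 | h1
        · exact absurd h1 hc
        · exact h1
    · rw [dif_neg h, dif_neg h]
      by_cases h2 : (i : ℕ) = n
      · have hii : i = ⟨n, Nat.lt_succ_of_lt (Nat.lt_succ_self n)⟩ := Fin.ext h2
        subst hii
        rw [if_pos h2, if_pos h2]
        have hne : (⟨n+1, Nat.lt_succ_self (n+1)⟩ : Fin (n+2)) ≠ ⟨n, Nat.lt_succ_of_lt (Nat.lt_succ_self n)⟩ := by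
          intro hc; have := congrArg Fin.val hc; simp at this
        rw [flipBit_apply_ne v _ _ hne, flipBit_apply_self]
        by_cases hc : v ⟨n, Nat.lt_succ_of_lt (Nat.lt_succ_self n)⟩ = v ⟨n+1, Nat.lt_succ_self (n+1)⟩
        · rw [if_pos hc, if_neg, flipBit_flipBit]
          rw [← hc]
          have : ∀ x : ZMod 2, ¬ (x + 1 = x) := by decide
          exact this _
        · rw [if_neg hc, if_pos]
          revert hc
          have : ∀ x y : ZMod 2, ¬ (x = y) → x + 1 = y := by decide
          exact this _ _
      · have h3 : (i : ℕ) = n + 1 := by omega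
        have hii : i = ⟨n+1, Nat.lt_succ_self (n+1)⟩ := Fin.ext h3
        subst hii
        rw [if_neg h2, if_neg h2]
        have hne : (⟨n, Nat.lt_succ_of_lt (Nat.lt_succ_self n)⟩ : Fin (n+2)) ≠ ⟨n+1, Nat.lt_succ_self (n+1)⟩ := by
          intro hc; have := congrArg Fin.val hc; simp at this
        rw [flipBit_apply_ne v _ _ hne, flipBit_apply_self]
        by_cases hc : v ⟨n+1, Nat.lt_succ_self (n+1)⟩ = v ⟨n, Nat.lt_succ_of_lt (Nat.lt_succ_self n)⟩ + 1
        · rw [if_pos hc, if_neg, flipBit_flipBit]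
          rw [hc]
          have : ∀ x : ZMod 2, ¬ (x + 1 + 1 = x + 1) := by decide
          exact this _
        · rw [if_neg hc, if_pos]
          revert hc
          have : ∀ x y : ZMod 2, ¬ (x = y + 1) → x + 1 = y + 1 := by decide
          exact this _ _

lemma liftOrient_head_lt {n : ℕ} (o : CubeOrientation n) (v : Fin (n+2) → ZMod 2)
    (i : Fin (n+2)) (h : (i : ℕ) < n) :
    ((liftOrient n o).head v i = v) ↔ o.head (proj2 n v) ⟨i, h⟩ = proj2 n v := by
  have hv : (liftOrient n o).head v i =
      (if o.head (proj2 n v) ⟨i, h⟩ = proj2 n v then v else flipBit v i) := by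
    show (if h' : (i : ℕ) < n then _ else _) = _
    rw [dif_pos h]
  rw [hv]
  split_ifs with hc
  · simp [hc]
  · simp only [hc, iff_false]
    exact flipBit_ne _ _

lemma liftOrient_head_n {n : ℕ} (o : CubeOrientation n) (v : Fin (n+2) → ZMod 2)
    (i : Fin (n+2)) (h : (i : ℕ) = n) :
    ((liftOrient n o).head v i = v) ↔ v ⟨n, by omega⟩ = v ⟨n+1, by omega⟩ := by
  have hv : (liftOrient n o).head v i =
      (if v ⟨n, by omega⟩ = v ⟨n+1, by omega⟩ then v else flipBit v i) := by
    show (if h' : (i : ℕ) < n then _ else _) = _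
    rw [dif_neg (by omega), if_pos h]
  rw [hv]
  split_ifs with hc
  · simp [hc]
  · simp only [hc, iff_false]
    exact flipBit_ne _ _

lemma liftOrient_head_n1 {n : ℕ} (o : CubeOrientation n) (v : Fin (n+2) → ZMod 2)
    (i : Fin (n+2)) (h : (i : ℕ) = n + 1) :
    ((liftOrient n o).head v i = v) ↔ v ⟨n+1, by omega⟩ = v ⟨n, by omega⟩ + 1 := by
  have hv : (liftOrient n o).head v i =
      (if v ⟨n+1, by omega⟩ = v ⟨n, by omega⟩ + 1 then v else flipBit v i) := by
    show (if h' : (i : ℕ) < n then _ else _) = _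
    rw [dif_neg (by omega), if_neg (by omega)]
  rw [hv]
  split_ifs with hc
  · simp [hc]
  · simp only [hc, iff_false]
    exact flipBit_ne _ _

theorem hypercube_two_indegrees_add_two (n : ℕ) (hn : 0 < n) (a b : ℤ)
    (ha0 : 0 ≤ a) (han : a ≤ n) (hb0 : 0 ≤ b) (hbn : b ≤ n)
    (h : ∃ o : CubeOrientation n, ∀ v, (o.inDeg v : ℤ) = a ∨ (o.inDeg v : ℤ) = b) :
    ∃ o : CubeOrientation (n + 2), ∀ v,
      (o.inDeg v : ℤ) = a + 1 ∨ (o.inDeg v : ℤ) = b + 1 := by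
  obtain ⟨o, ho⟩ := h
  refine ⟨liftOrient n o, fun v => ?_⟩
  have key : (liftOrient n o).inDeg v = o.inDeg (proj2 n v) + 1 := by
    rw [CubeOrientation.inDeg, CubeOrientation.inDeg, Finset.card_filter, Finset.card_filter,
        Fin.sum_univ_castSucc, Fin.sum_univ_castSucc]
    have hmain : ∀ j : Fin n,
        (if (liftOrient n o).head v (Fin.castSucc (Fin.castSucc j)) = v then 1 else 0) =
        (if o.head (proj2 n v) j = proj2 n v then (1:ℕ) else 0) := by
      intro j
      have hj : ((Fin.castSucc (Fin.castSucc j) : Fin (n+2)) : ℕ) < n := j.isLt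
      rw [if_congr (liftOrient_head_lt o v _ hj) rfl rfl]
      congr 1
    rw [Finset.sum_congr rfl (fun j _ => hmain j)]
    have h1 : (((Fin.castSucc (Fin.last n)) : Fin (n+2)) : ℕ) = n := rfl
    have h2 : ((Fin.last (n+1) : Fin (n+2)) : ℕ) = n + 1 := rfl
    rw [if_congr (liftOrient_head_n o v _ h1) rfl rfl,
        if_congr (liftOrient_head_n1 o v _ h2) rfl rfl]
    have hone : ∀ x y : ZMod 2,
        ((if x = y then (1:ℕ) else 0) + if y = x + 1 then 1 else 0) = 1 := by decide
    rw [add_assoc, hone]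
  rw [key]
  rcases ho (proj2 n v) with h1 | h1
  · left; push_cast; omega
  · right; push_cast; omega
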